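/- arXiv:1103.5239 — 2 statements merged into one kernel-verified Lean document; each statement's English description precedes it below -/
import Mathlib

section
/- The complete bipartite graph K_{3,3} admits a coherent 4-cycle orientation of level 3; that is, one can choose, for each of the nine 4-cycles of K_{3,3}, one of its two directions so that every path v_0, v_1, v_2 on 3 distinct vertices with consecutive vertices adjacent occurs as a consecutive segment of exactly one chosen directed 4-cycle. -/
/-- A directed `g`-cycle of a simple graph `G`: an injective map `c : ZMod g → V`
with `c i` adjacent to `c (i+1)` for all `i`. -/
def IsDirCycleOn {V : Type*} (G : SimpleGraph V) (g : ℕ) (c : ZMod g → V) : Prop :=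
  Function.Injective c ∧ ∀ i : ZMod g, G.Adj (c i) (c (i + 1))

/-- A sequence of `k` distinct vertices with consecutive vertices adjacent. -/
def IsPathSeq {V : Type*} (G : SimpleGraph V) (k : ℕ) (v : Fin k → V) : Prop :=
  Function.Injective v ∧ ∀ (j : ℕ) (h : j + 1 < k),
    G.Adj (v ⟨j, Nat.lt_of_succ_lt h⟩) (v ⟨j + 1, h⟩)

/-- A coherent `g`-cycle orientation of level `k` of `G`: a set `D` of directed
`g`-cycles of `G` containing, for every `g`-cycle of `G`, exactly one of its two
directions (one representative up to rotation), and such that every sequence of `k`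
distinct vertices `v 0, …, v (k-1)` with consecutive vertices adjacent occurs as a
consecutive segment `(c i, c (i+1), …, c (i+k-1))` of exactly one `c ∈ D`. -/
def IsCoherentOrientation {V : Type*} (G : SimpleGraph V) (g k : ℕ)
    (D : Set (ZMod g → V)) : Prop :=
  (∀ c ∈ D, IsDirCycleOn G g c) ∧
  (∀ c : ZMod g → V, IsDirCycleOn G g c →
    ∃! c', c' ∈ D ∧
      ((∃ r : ZMod g, ∀ i, c' i = c (i + r)) ∨ (∃ r : ZMod g, ∀ i, c' i = c (r - i)))) ∧
  (∀ v : Fin k → V, IsPathSeq G k v →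
    ∃! c, c ∈ D ∧ ∃ i : ZMod g, ∀ j : Fin k, c (i + ((j : ℕ) : ZMod g)) = v j)


abbrev V33 := Fin 3 ⊕ Fin 3
abbrev G33 := completeBipartiteGraph (Fin 3) (Fin 3)

def cyc (i j : Fin 3) : ZMod 4 → V33 :=
  ![Sum.inl (i+1), Sum.inr (j+1), Sum.inl (i+2), Sum.inr (j+2)]

def Dpred (c : ZMod 4 → V33) : Prop := ∃ i j : Fin 3, c = cyc i j

def fun4 (a b c d : V33) : ZMod 4 → V33 := ![a, b, c, d]
def fun3 (a b c : V33) : Fin 3 → V33 := ![a, b, c]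

instance : DecidableRel G33.Adj := fun a b => by
  simp only [completeBipartiteGraph]; infer_instance

instance (c : ZMod 4 → V33) : Decidable (IsDirCycleOn G33 4 c) := by
  unfold IsDirCycleOn; infer_instance

lemma fun4_eta (c : ZMod 4 → V33) : fun4 (c 0) (c 1) (c 2) (c 3) = c := by
  funext i; fin_cases i <;> rfl

lemma fun3_eta (v : Fin 3 → V33) : fun3 (v 0) (v 1) (v 2) = v := by
  funext i; fin_cases i <;> rfl

lemma exu_of {P : (ZMod 4 → V33) → Prop}
    (h1 : ∃ i j : Fin 3, P (cyc i j))
    (h2 : ∀ i j i' j' : Fin 3, P (cyc i j) → P (cyc i' j') → i = i' ∧ j = j') :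
    ∃! c', (c' ∈ setOf Dpred) ∧ P c' := by
  obtain ⟨i, j, hP⟩ := h1
  refine ⟨cyc i j, ⟨⟨i, j, rfl⟩, hP⟩, ?_⟩
  rintro y ⟨⟨i', j', rfl⟩, hy⟩
  obtain ⟨h, h'⟩ := h2 i' j' i j hy hP
  rw [h, h']

set_option synthInstance.maxHeartbeats 1000000 in
set_option synthInstance.maxSize 2048 in
set_option maxHeartbeats 4000000 in
lemma key3 : ∀ a b c : V33, Function.Injective (fun3 a b c) →
    G33.Adj a b → G33.Adj b c →
    (∃ i j : Fin 3, ∃ r : ZMod 4, ∀ s : Fin 3, cyc i j (r + ((s : ℕ) : ZMod 4)) = fun3 a b c s) ∧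
    (∀ i j i' j' : Fin 3,
      (∃ r : ZMod 4, ∀ s : Fin 3, cyc i j (r + ((s : ℕ) : ZMod 4)) = fun3 a b c s) →
      (∃ r : ZMod 4, ∀ s : Fin 3, cyc i' j' (r + ((s : ℕ) : ZMod 4)) = fun3 a b c s) →
      i = i' ∧ j = j') := by decide

set_option synthInstance.maxHeartbeats 1000000 in
set_option synthInstance.maxSize 2048 in
set_option maxHeartbeats 8000000 in
lemma key2 : ∀ a b c d : V33, IsDirCycleOn G33 4 (fun4 a b c d) →
    (∃ i j : Fin 3,
      ((∃ r : ZMod 4, ∀ s : ZMod 4, cyc i j s = fun4 a b c d (s + r)) ∨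
       (∃ r : ZMod 4, ∀ s : ZMod 4, cyc i j s = fun4 a b c d (r - s)))) ∧
    (∀ i j i' j' : Fin 3,
      ((∃ r : ZMod 4, ∀ s : ZMod 4, cyc i j s = fun4 a b c d (s + r)) ∨
       (∃ r : ZMod 4, ∀ s : ZMod 4, cyc i j s = fun4 a b c d (r - s))) →
      ((∃ r : ZMod 4, ∀ s : ZMod 4, cyc i' j' s = fun4 a b c d (s + r)) ∨
       (∃ r : ZMod 4, ∀ s : ZMod 4, cyc i' j' s = fun4 a b c d (r - s))) →
      i = i' ∧ j = j') := by decide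

/-- The complete bipartite graph `K_{3,3}` admits a coherent 4-cycle orientation of
level 3. -/
theorem k33_coherent_orientation :
    ∃ D : Set (ZMod 4 → (Fin 3 ⊕ Fin 3)),
      IsCoherentOrientation (completeBipartiteGraph (Fin 3) (Fin 3)) 4 3 D := by
  refine ⟨setOf Dpred, ?_, ?_, ?_⟩
  · rintro c ⟨i, j, rfl⟩
    revert i j
    decide
  · intro c hc
    have h := key2 (c 0) (c 1) (c 2) (c 3)
    rw [fun4_eta c] at h
    exact exu_of (h hc).1 (h hc).2
  · intro v hv
    have h := key3 (v 0) (v 1) (v 2)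
    rw [fun3_eta v] at h
    have h01 : G33.Adj (v 0) (v 1) := hv.2 0 (by norm_num)
    have h12 : G33.Adj (v 1) (v 2) := hv.2 1 (by norm_num)
    exact exu_of (h hv.1 h01 h12).1 (h hv.1 h01 h12).2
end

section
/- The Pappus graph admits no coherent 6-cycle orientation of level 3; that is, there is no choice, for each 6-cycle of the Pappus graph, of one of its two directions such that every path v_0, v_1, v_2 on 3 distinct vertices with consecutive vertices adjacent occurs as a consecutive segment of exactly one chosen directed 6-cycle. -/
/-- The Pappus graph: vertex set `ZMod 18`, `i` adjacent to `i+1`, together with the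
extra edges `{1+6x, 6+6x}`, `{2+6x, 9+6x}`, `{4+6x, 11+6x}`. -/
def pappusGraph : SimpleGraph (ZMod 18) :=
  SimpleGraph.fromRel (fun i j =>
    j = i + 1 ∨ ∃ x : ZMod 18,
      (i = 1 + 6 * x ∧ j = 6 + 6 * x) ∨ (i = 2 + 6 * x ∧ j = 9 + 6 * x) ∨
      (i = 4 + 6 * x ∧ j = 11 + 6 * x))

instance pappusAdjDec : DecidableRel pappusGraph.Adj := fun a b =>
  decidable_of_iff' _ (SimpleGraph.fromRel_adj _ a b)

/-- `D` contains some rotation of the directed cycle `X`. -/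
def RotIn (D : Set (ZMod 6 → ZMod 18)) (X : ZMod 6 → ZMod 18) : Prop :=
  ∃ c ∈ D, ∃ r : ZMod 6, ∀ i, c i = X (i + r)

lemma rotin_shift {D : Set (ZMod 6 → ZMod 18)} {X Y : ZMod 6 → ZMod 18} (s : ZMod 6)
    (h : ∀ i, X i = Y (i + s)) (hX : RotIn D X) : RotIn D Y := by
  obtain ⟨c, hc, r, hr⟩ := hX
  exact ⟨c, hc, r + s, fun i => by rw [hr i, h (i + r), add_assoc]⟩

lemma zmod6_cases : ∀ j : ZMod 6, j = 0 ∨ j = 1 ∨ j = 2 ∨ j = 3 ∨ j = 4 ∨ j = 5 := by decide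

/-- Classification of directed 6-cycles through a fixed 2-path, from a decidable core. -/
lemma cls_of {v0 v1 v2 : ZMod 18} {A B : ZMod 6 → ZMod 18}
    (hA0 : A 0 = v0) (hA1 : A 1 = v1) (hA2 : A 2 = v2)
    (hB0 : B 0 = v0) (hB1 : B 1 = v1) (hB2 : B 2 = v2)
    (hdec : ∀ v3 v4 v5 : ZMod 18,
      pappusGraph.Adj v2 v3 → v3 ≠ v0 → v3 ≠ v1 → v3 ≠ v2 →
      pappusGraph.Adj v3 v4 → v4 ≠ v0 → v4 ≠ v1 → v4 ≠ v2 → v4 ≠ v3 →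
      pappusGraph.Adj v4 v5 → pappusGraph.Adj v5 v0 →
      v5 ≠ v0 → v5 ≠ v1 → v5 ≠ v2 → v5 ≠ v3 → v5 ≠ v4 →
      (v3 = A 3 ∧ v4 = A 4 ∧ v5 = A 5) ∨ (v3 = B 3 ∧ v4 = B 4 ∧ v5 = B 5)) :
    ∀ c : ZMod 6 → ZMod 18, IsDirCycleOn pappusGraph 6 c → ∀ i : ZMod 6,
      c i = v0 → c (i + 1) = v1 → c (i + 2) = v2 →
      (∀ j, c (i + j) = A j) ∨ (∀ j, c (i + j) = B j) := by
  rintro c ⟨hinj, hadj⟩ i h0 h1 h2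
  have key : ∀ a b : ZMod 6, a ≠ b → c (i + a) ≠ c (i + b) :=
    fun a b hab he => hab (add_left_cancel (hinj he))
  have key0 : ∀ a : ZMod 6, a ≠ 0 → c (i + a) ≠ v0 := by
    intro a ha he
    exact ha (add_eq_left.mp (hinj (he.trans h0.symm)))
  have key1 : ∀ a : ZMod 6, a ≠ 1 → c (i + a) ≠ v1 := fun a ha => h1 ▸ key a 1 ha
  have key2 : ∀ a : ZMod 6, a ≠ 2 → c (i + a) ≠ v2 := fun a ha => h2 ▸ key a 2 ha
  have a23 : pappusGraph.Adj v2 (c (i + 3)) := by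
    have := hadj (i + 2); rwa [show i + 2 + 1 = i + 3 by ring, h2] at this
  have a34 : pappusGraph.Adj (c (i + 3)) (c (i + 4)) := by
    have := hadj (i + 3); rwa [show i + 3 + 1 = i + 4 by ring] at this
  have a45 : pappusGraph.Adj (c (i + 4)) (c (i + 5)) := by
    have := hadj (i + 4); rwa [show i + 4 + 1 = i + 5 by ring] at this
  have a50 : pappusGraph.Adj (c (i + 5)) v0 := by
    have := hadj (i + 5)
    rwa [show i + 5 + 1 = i by
      rw [add_assoc, show (5 : ZMod 6) + 1 = 0 by decide, add_zero], h0] at this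
  have := hdec (c (i + 3)) (c (i + 4)) (c (i + 5)) a23
    (key0 3 (by decide)) (key1 3 (by decide)) (key2 3 (by decide)) a34
    (key0 4 (by decide)) (key1 4 (by decide)) (key2 4 (by decide)) (key 4 3 (by decide)) a45 a50
    (key0 5 (by decide)) (key1 5 (by decide)) (key2 5 (by decide)) (key 5 3 (by decide))
    (key 5 4 (by decide))
  rcases this with ⟨e3, e4, e5⟩ | ⟨e3, e4, e5⟩
  · left
    intro j
    rcases zmod6_cases j with rfl | rfl | rfl | rfl | rfl | rfl
    · rw [add_zero, hA0]; exact h0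
    · rw [hA1]; exact h1
    · rw [hA2]; exact h2
    · exact e3
    · exact e4
    · exact e5
  · right
    intro j
    rcases zmod6_cases j with rfl | rfl | rfl | rfl | rfl | rfl
    · rw [add_zero, hB0]; exact h0
    · rw [hB1]; exact h1
    · rw [hB2]; exact h2
    · exact e3
    · exact e4
    · exact e5

lemma cover_of_rot {cA A : ZMod 6 → ZMod 18} {v0 v1 v2 : ZMod 18} (rA : ZMod 6)
    (hrA : ∀ i, cA i = A (i + rA)) (hA0 : A 0 = v0) (hA1 : A 1 = v1) (hA2 : A 2 = v2) :
    ∀ j : Fin 3, cA (-rA + ((j : ℕ) : ZMod 6)) = ![v0, v1, v2] j := by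
  intro j
  rw [hrA, show -rA + ((j : ℕ) : ZMod 6) + rA = ((j : ℕ) : ZMod 6) by ring]
  fin_cases j <;> simp [hA0, hA1, hA2]

/-- For a 2-path contained in exactly the two directed hexagons `A` and `B`
(in the path's direction), exactly one of them has a rotation in `D`. -/
lemma path_xor {D : Set (ZMod 6 → ZMod 18)}
    (hD1 : ∀ c ∈ D, IsDirCycleOn pappusGraph 6 c)
    (hD3 : ∀ v : Fin 3 → ZMod 18, IsPathSeq pappusGraph 3 v →
      ∃! c, c ∈ D ∧ ∃ i : ZMod 6, ∀ j : Fin 3, c (i + ((j : ℕ) : ZMod 6)) = v j)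
    {v0 v1 v2 : ZMod 18} {A B : ZMod 6 → ZMod 18}
    (hpath : IsPathSeq pappusGraph 3 ![v0, v1, v2])
    (hA0 : A 0 = v0) (hA1 : A 1 = v1) (hA2 : A 2 = v2)
    (hB0 : B 0 = v0) (hB1 : B 1 = v1) (hB2 : B 2 = v2)
    (hnot : ∀ s : ZMod 6, ∃ i, A i ≠ B (i + s))
    (hcls : ∀ c : ZMod 6 → ZMod 18, IsDirCycleOn pappusGraph 6 c → ∀ i : ZMod 6,
      c i = v0 → c (i + 1) = v1 → c (i + 2) = v2 →
      (∀ j, c (i + j) = A j) ∨ (∀ j, c (i + j) = B j)) :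
    (RotIn D A ∨ RotIn D B) ∧ ¬(RotIn D A ∧ RotIn D B) := by
  obtain ⟨c, ⟨hcD, i, hcov⟩, huniq⟩ := hD3 ![v0, v1, v2] hpath
  constructor
  · have h0 : c i = v0 := by have := hcov 0; simpa using this
    have h1 : c (i + 1) = v1 := by have := hcov 1; simpa using this
    have h2 : c (i + 2) = v2 := by have := hcov 2; simpa using this
    rcases hcls c (hD1 c hcD) i h0 h1 h2 with hc | hc
    · exact Or.inl ⟨c, hcD, -i, fun i' => by
        have := hc (i' - i)
        rw [show i + (i' - i) = i' by ring] at this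
        rw [this, sub_eq_add_neg]⟩
    · exact Or.inr ⟨c, hcD, -i, fun i' => by
        have := hc (i' - i)
        rw [show i + (i' - i) = i' by ring] at this
        rw [this, sub_eq_add_neg]⟩
  · rintro ⟨⟨cA, hcA, rA, hrA⟩, ⟨cB, hcB, rB, hrB⟩⟩
    have eA := huniq cA ⟨hcA, -rA, cover_of_rot rA hrA hA0 hA1 hA2⟩
    have eB := huniq cB ⟨hcB, -rB, cover_of_rot rB hrB hB0 hB1 hB2⟩
    obtain ⟨i0, hne⟩ := hnot (rB - rA)
    apply hne
    have h1 : A i0 = cA (i0 - rA) := by rw [hrA, show i0 - rA + rA = i0 by ring]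
    have h2 : cB (i0 - rA) = B (i0 + (rB - rA)) := by
      rw [hrB, show i0 - rA + rB = i0 + (rB - rA) by ring]
    rw [h1, eA, ← eB, h2]

/-- For each undirected hexagon (with forward version `F` and reverse version `R`),
exactly one of the two directions has a rotation in `D`. -/
lemma cyc_xor {D : Set (ZMod 6 → ZMod 18)}
    (hD2 : ∀ c : ZMod 6 → ZMod 18, IsDirCycleOn pappusGraph 6 c →
      ∃! c', c' ∈ D ∧
        ((∃ r : ZMod 6, ∀ i, c' i = c (i + r)) ∨ (∃ r : ZMod 6, ∀ i, c' i = c (r - i))))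
    {F R : ZMod 6 → ZMod 18} (hF : IsDirCycleOn pappusGraph 6 F)
    (s : ZMod 6) (hR : ∀ i, R i = F (s - i))
    (hnot : ∀ r1 r2 : ZMod 6, ∃ i, F (i + r1) ≠ R (i + r2)) :
    (RotIn D F ∨ RotIn D R) ∧ ¬(RotIn D F ∧ RotIn D R) := by
  obtain ⟨c, ⟨hcD, hor⟩, huniq⟩ := hD2 F hF
  constructor
  · rcases hor with ⟨r, h⟩ | ⟨r, h⟩
    · exact Or.inl ⟨c, hcD, r, h⟩
    · refine Or.inr ⟨c, hcD, s - r, fun i => ?_⟩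
      rw [h i, hR]; congr 1; ring
  · rintro ⟨⟨c1, h1D, r1, h1⟩, ⟨c2, h2D, r2, h2⟩⟩
    have e1 := huniq c1 ⟨h1D, Or.inl ⟨r1, h1⟩⟩
    have e2 := huniq c2 ⟨h2D, Or.inr ⟨s - r2, fun i => by rw [h2 i, hR]; congr 1; ring⟩⟩
    obtain ⟨i0, hne⟩ := hnot r1 r2
    apply hne
    rw [← h1 i0, ← h2 i0, e1, e2]

section Hexagons

/-! The four hexagons involved in the contradiction, with the relevant
directed representatives. -/

def pF0 : ZMod 6 → ZMod 18 := ![0,1,2,3,14,13]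
def pF1 : ZMod 6 → ZMod 18 := ![0,1,2,9,10,17]
def pF2 : ZMod 6 → ZMod 18 := ![0,1,6,5,16,17]
def pF6 : ZMod 6 → ZMod 18 := ![1,2,3,4,5,6]
def pA1 : ZMod 6 → ZMod 18 := ![1,2,3,14,13,0]
def pR1 : ZMod 6 → ZMod 18 := ![1,0,17,10,9,2]
def pR2 : ZMod 6 → ZMod 18 := ![1,0,17,16,5,6]
def pR6 : ZMod 6 → ZMod 18 := ![1,6,5,4,3,2]
def pA4 : ZMod 6 → ZMod 18 := ![1,6,5,16,17,0]

set_option synthInstance.maxSize 1000 in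
set_option maxHeartbeats 1000000 in
lemma dec1 : ∀ v3 v4 v5 : ZMod 18,
    pappusGraph.Adj 3 v3 → v3 ≠ 1 → v3 ≠ 2 → v3 ≠ 3 →
    pappusGraph.Adj v3 v4 → v4 ≠ 1 → v4 ≠ 2 → v4 ≠ 3 → v4 ≠ v3 →
    pappusGraph.Adj v4 v5 → pappusGraph.Adj v5 1 →
    v5 ≠ 1 → v5 ≠ 2 → v5 ≠ 3 → v5 ≠ v3 → v5 ≠ v4 →
    (v3 = pA1 3 ∧ v4 = pA1 4 ∧ v5 = pA1 5) ∨ (v3 = pF6 3 ∧ v4 = pF6 4 ∧ v5 = pF6 5) := by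
  decide

set_option synthInstance.maxSize 1000 in
set_option maxHeartbeats 1000000 in
lemma dec2 : ∀ v3 v4 v5 : ZMod 18,
    pappusGraph.Adj 2 v3 → v3 ≠ 0 → v3 ≠ 1 → v3 ≠ 2 →
    pappusGraph.Adj v3 v4 → v4 ≠ 0 → v4 ≠ 1 → v4 ≠ 2 → v4 ≠ v3 →
    pappusGraph.Adj v4 v5 → pappusGraph.Adj v5 0 →
    v5 ≠ 0 → v5 ≠ 1 → v5 ≠ 2 → v5 ≠ v3 → v5 ≠ v4 →
    (v3 = pF0 3 ∧ v4 = pF0 4 ∧ v5 = pF0 5) ∨ (v3 = pF1 3 ∧ v4 = pF1 4 ∧ v5 = pF1 5) := by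
  decide

set_option synthInstance.maxSize 1000 in
set_option maxHeartbeats 1000000 in
lemma dec3 : ∀ v3 v4 v5 : ZMod 18,
    pappusGraph.Adj 17 v3 → v3 ≠ 1 → v3 ≠ 0 → v3 ≠ 17 →
    pappusGraph.Adj v3 v4 → v4 ≠ 1 → v4 ≠ 0 → v4 ≠ 17 → v4 ≠ v3 →
    pappusGraph.Adj v4 v5 → pappusGraph.Adj v5 1 →
    v5 ≠ 1 → v5 ≠ 0 → v5 ≠ 17 → v5 ≠ v3 → v5 ≠ v4 →
    (v3 = pR1 3 ∧ v4 = pR1 4 ∧ v5 = pR1 5) ∨ (v3 = pR2 3 ∧ v4 = pR2 4 ∧ v5 = pR2 5) := by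
  decide

set_option synthInstance.maxSize 1000 in
set_option maxHeartbeats 1000000 in
lemma dec4 : ∀ v3 v4 v5 : ZMod 18,
    pappusGraph.Adj 5 v3 → v3 ≠ 1 → v3 ≠ 6 → v3 ≠ 5 →
    pappusGraph.Adj v3 v4 → v4 ≠ 1 → v4 ≠ 6 → v4 ≠ 5 → v4 ≠ v3 →
    pappusGraph.Adj v4 v5 → pappusGraph.Adj v5 1 →
    v5 ≠ 1 → v5 ≠ 6 → v5 ≠ 5 → v5 ≠ v3 → v5 ≠ v4 →
    (v3 = pA4 3 ∧ v4 = pA4 4 ∧ v5 = pA4 5) ∨ (v3 = pR6 3 ∧ v4 = pR6 4 ∧ v5 = pR6 5) := by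
  decide

lemma pathSeq_of (v0 v1 v2 : ZMod 18) (hinj : Function.Injective ![v0, v1, v2])
    (h01 : pappusGraph.Adj v0 v1) (h12 : pappusGraph.Adj v1 v2) :
    IsPathSeq pappusGraph 3 ![v0, v1, v2] := by
  refine ⟨hinj, fun j h => ?_⟩
  match j, h with
  | 0, _ => exact h01
  | 1, _ => exact h12

end Hexagons
set_option maxHeartbeats 1000000 in
/-- The Pappus graph admits no coherent 6-cycle orientation of level 3. -/
theorem pappus_no_coherent_orientation :
    ¬ ∃ D : Set (ZMod 6 → ZMod 18), IsCoherentOrientation pappusGraph 6 3 D := by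
  rintro ⟨D, hD1, hD2, hD3⟩
  -- path (1,2,3) : hexagons pA1 (a rotation of pF0) and pF6
  have P1 : IsPathSeq pappusGraph 3 ![1,2,3] :=
    pathSeq_of 1 2 3 (by decide) (by decide) (by decide)
  have cls1 := cls_of (A := pA1) (B := pF6) (v0 := 1) (v1 := 2) (v2 := 3)
    (by decide) (by decide) (by decide) (by decide) (by decide) (by decide) dec1
  have X1 := path_xor hD1 hD3 P1
    (by decide) (by decide) (by decide) (by decide) (by decide) (by decide) (by decide) cls1
  -- path (0,1,2) : hexagons pF0 and pF1
  have P2 : IsPathSeq pappusGraph 3 ![0,1,2] :=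
    pathSeq_of 0 1 2 (by decide) (by decide) (by decide)
  have cls2 := cls_of (A := pF0) (B := pF1) (v0 := 0) (v1 := 1) (v2 := 2)
    (by decide) (by decide) (by decide) (by decide) (by decide) (by decide) dec2
  have X2 := path_xor hD1 hD3 P2
    (by decide) (by decide) (by decide) (by decide) (by decide) (by decide) (by decide) cls2
  -- path (1,0,17) : hexagons pR1 and pR2
  have P3 : IsPathSeq pappusGraph 3 ![1,0,17] :=
    pathSeq_of 1 0 17 (by decide) (by decide) (by decide)
  have cls3 := cls_of (A := pR1) (B := pR2) (v0 := 1) (v1 := 0) (v2 := 17)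
    (by decide) (by decide) (by decide) (by decide) (by decide) (by decide) dec3
  have X3 := path_xor hD1 hD3 P3
    (by decide) (by decide) (by decide) (by decide) (by decide) (by decide) (by decide) cls3
  -- path (1,6,5) : hexagons pA4 (a rotation of pF2) and pR6
  have P4 : IsPathSeq pappusGraph 3 ![1,6,5] :=
    pathSeq_of 1 6 5 (by decide) (by decide) (by decide)
  have cls4 := cls_of (A := pA4) (B := pR6) (v0 := 1) (v1 := 6) (v2 := 5)
    (by decide) (by decide) (by decide) (by decide) (by decide) (by decide) dec4
  have X4 := path_xor hD1 hD3 P4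
    (by decide) (by decide) (by decide) (by decide) (by decide) (by decide) (by decide) cls4
  -- orientation constraints for the three hexagons pF1, pF2, pF6
  have C1 := cyc_xor hD2 (F := pF1) (R := pR1) ⟨by decide, by decide⟩ 1 (by decide) (by decide)
  have C2 := cyc_xor hD2 (F := pF2) (R := pR2) ⟨by decide, by decide⟩ 1 (by decide) (by decide)
  have C6 := cyc_xor hD2 (F := pF6) (R := pR6) ⟨by decide, by decide⟩ 0 (by decide) (by decide)
  -- transfer between rotated representatives
  have tA1 : RotIn D pA1 ↔ RotIn D pF0 :=
    ⟨rotin_shift 1 (by decide), rotin_shift 5 (by decide)⟩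
  have tA4 : RotIn D pA4 ↔ RotIn D pF2 :=
    ⟨rotin_shift 1 (by decide), rotin_shift 5 (by decide)⟩
  rw [tA1] at X1
  rw [tA4] at X4
  -- Propositional contradiction: the four path constraints and three orientation
  -- constraints form an odd cycle.
  rcases X2.1 with ha | hb
  · have hd' : RotIn D pR6 := by
      rcases C6.1 with h | h
      · exact absurd ⟨ha, h⟩ X1.2
      · exact h
    have hc' : RotIn D pR2 := by
      rcases C2.1 with h | h
      · exact absurd ⟨h, hd'⟩ X4.2
      · exact h
    have hb : RotIn D pF1 := by
      rcases C1.1 with h | h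
      · exact h
      · exact absurd ⟨h, hc'⟩ X3.2
    exact X2.2 ⟨ha, hb⟩
  · have ha' : ¬ RotIn D pF0 := fun h => X2.2 ⟨h, hb⟩
    have hd : RotIn D pF6 := X1.1.resolve_left ha'
    have hc : RotIn D pF2 := by
      rcases X4.1 with h | h
      · exact h
      · exact absurd ⟨hd, h⟩ C6.2
    have hb' : RotIn D pR1 := by
      rcases X3.1 with h | h
      · exact h
      · exact absurd ⟨hc, h⟩ C2.2
    exact C1.2 ⟨hb, hb'⟩
end
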